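/- Let P > 0 and let G : ℝ → ℝ be a C¹-smooth, P-periodic function with G(t) > 0 for all t. Then there exist a real number a > 0 and a C²-smooth, strictly increasing function f : ℝ → ℝ such that a·f'(s) = G(f(s)) for all s ∈ ℝ and f(s + P) = f(s) + P for all s ∈ ℝ. -/

import Mathlib

open Filter MeasureTheory

theorem stmt_2 (P : ℝ) (hP : 0 < P) (G : ℝ → ℝ)
    (hG : ContDiff ℝ 1 G) (hGper : ∀ t : ℝ, G (t + P) = G t)
    (hGpos : ∀ t : ℝ, 0 < G t) :
    ∃ (a : ℝ) (f : ℝ → ℝ), 0 < a ∧ ContDiff ℝ 2 f ∧ StrictMono f ∧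
      (∀ s : ℝ, a * deriv f s = G (f s)) ∧ (∀ s : ℝ, f (s + P) = f s + P) := by
  have hGc : Continuous G := hG.continuous
  set g : ℝ → ℝ := fun t => (G t)⁻¹ with hg_def
  have hgc : Continuous g := hGc.inv₀ fun t => (hGpos t).ne'
  have hgpos : ∀ t, 0 < g t := fun t => inv_pos.2 (hGpos t)
  have hgper : Function.Periodic g P := fun t => by simp [hg_def, hGper t]
  have h_int : ∀ t₁ t₂, IntervalIntegrable g volume t₁ t₂ :=
    fun t₁ t₂ => hgc.intervalIntegrable t₁ t₂
  set H : ℝ → ℝ := fun x => ∫ t in (0:ℝ)..x, g t with hH_def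
  have hH' : ∀ x, HasDerivAt H (g x) x := fun x =>
    intervalIntegral.integral_hasDerivAt_right (h_int 0 x)
      hgc.aestronglyMeasurable.stronglyMeasurableAtFilter hgc.continuousAt
  have hHdiff : Differentiable ℝ H := fun x => (hH' x).differentiableAt
  have hHmono : StrictMono H := strictMono_of_deriv_pos fun x => by
    rw [(hH' x).deriv]; exact hgpos x
  have hHsurj : Function.Surjective H :=
    hHdiff.continuous.surjective
      (hgper.tendsto_atTop_intervalIntegral_of_pos' (h_int 0 P) hgpos hP)
      (hgper.tendsto_atBot_intervalIntegral_of_pos' (h_int 0 P) hgpos hP)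
  set c : ℝ := H P with hc_def
  have hc : 0 < c := by
    have h0 : H 0 = 0 := intervalIntegral.integral_same
    have := hHmono hP
    rwa [h0] at this
  have hHper : ∀ x, H (x + P) = H x + c := by
    intro x
    have h1 : (∫ t in (0:ℝ)..x, g t) + (∫ t in x..(x+P), g t) = ∫ t in (0:ℝ)..(x+P), g t :=
      intervalIntegral.integral_add_adjacent_intervals (h_int 0 x) (h_int x (x+P))
    have h2 : (∫ t in x..(x+P), g t) = ∫ t in (0:ℝ)..((0:ℝ)+P), g t :=
      hgper.intervalIntegral_add_eq x 0
    simp only [zero_add] at h2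
    simp only [hH_def, hc_def]
    rw [← h1, h2]
  set e : ℝ ≃o ℝ := StrictMono.orderIsoOfSurjective H hHmono hHsurj with he_def
  set f₀ : ℝ → ℝ := fun y => e.symm y with hf₀_def
  have hHf₀ : ∀ y, H (f₀ y) = y := fun y => e.apply_symm_apply y
  have hf₀cont : Continuous f₀ := (OrderIso.continuous e.symm)
  have hf₀' : ∀ y, HasDerivAt f₀ (G (f₀ y)) y := by
    intro y
    have h := HasDerivAt.of_local_left_inverse hf₀cont.continuousAt (hH' (f₀ y))
      (hgpos (f₀ y)).ne' (Filter.Eventually.of_forall fun z => hHf₀ z)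
    simpa [hg_def] using h
  set k : ℝ := c / P with hk_def
  have hk : 0 < k := div_pos hc hP
  set f : ℝ → ℝ := fun s => f₀ (k * s) with hf_def
  have hf' : ∀ s, HasDerivAt f (G (f s) * k) s := by
    intro s
    have hin : HasDerivAt (fun s : ℝ => k * s) k s := by
      simpa using (hasDerivAt_id s).const_mul k
    exact (hf₀' (k * s)).comp s hin
  have hfdiff : Differentiable ℝ f := fun s => (hf' s).differentiableAt
  have hfderiv : deriv f = fun s => G (f s) * k := funext fun s => (hf' s).deriv
  have hf1 : ContDiff ℝ 1 f := contDiff_one_iff_deriv.2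
    ⟨hfdiff, by rw [hfderiv]; exact (hGc.comp hfdiff.continuous).mul continuous_const⟩
  refine ⟨k⁻¹, f, inv_pos.2 hk, ?_, ?_, ?_, ?_⟩
  · have h2 : (2 : WithTop ℕ∞) = 1 + 1 := by norm_num
    rw [h2, contDiff_succ_iff_deriv]
    refine ⟨hfdiff, by simp, ?_⟩
    rw [hfderiv]
    exact (hG.comp hf1).mul contDiff_const
  · intro s t hst
    exact e.symm.strictMono (by nlinarith)
  · intro s
    rw [hfderiv]
    field_simp
  · intro s
    have hkP : k * (s + P) = k * s + c := by
      rw [hk_def]; field_simp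
    have : H (f₀ (k * s) + P) = H (f₀ (k * s + c)) := by
      rw [hHper, hHf₀, hHf₀]
    have := hHmono.injective this
    simp only [hf_def, hkP]
    rw [← this]
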